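/- arXiv:2501.05481 — 5 statements merged into one kernel-verified Lean document; each statement's English description precedes it below -/
import Mathlib

section
/- If a behavioral strategy profile σ of the infinitely repeated game with perfect monitoring is a Blackwell subgame-perfect Nash equilibrium (i.e., there exists δ̲ < 1 such that σ is an SPNE at every discount factor vector δ = (δ_1,…,δ_n) with δ_i ≥ δ̲ for all i), then for every finite history h the prescribed mixed action profile σ(h) belongs to 𝒜^MI, i.e., for every player i and every action a_i in the support of σ_i(h), g_i(a_i, σ_{-i}(h)) = g_i(σ(h)). -/
open Finset

section StageGame

variable {I : Type*} [Fintype I] [DecidableEq I]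
variable {A : I → Type*} [∀ i, Fintype (A i)] [∀ i, DecidableEq (A i)] [∀ i, Nonempty (A i)]

/-- `α` is a profile of mixed actions: each component is a probability vector. -/
def IsMixed (α : ∀ i, A i → ℝ) : Prop :=
  ∀ i, (∀ a, 0 ≤ α i a) ∧ (∑ a, α i a) = 1

/-- The point mass on a pure action. -/
def pureAction {I : Type*} {A : I → Type*} [∀ i, DecidableEq (A i)] {i : I} (a : A i) :
    A i → ℝ := fun b => if b = a then 1 else 0

/-- The profile of point masses on a pure action profile. -/
def pureProfile (a : ∀ i, A i) : ∀ i, A i → ℝ := fun i => pureAction (a i)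

/-- Multilinear extension of the reward function to mixed action profiles. -/
noncomputable def mixedPayoff (g : I → (∀ i, A i) → ℝ) (i : I) (α : ∀ j, A j → ℝ) : ℝ :=
  ∑ a : ∀ j, A j, (∏ j, α j (a j)) * g i a

/-- Payoff to player `i` from playing the pure action `ai` against `α₋ᵢ`. -/
noncomputable def devPayoff (g : I → (∀ i, A i) → ℝ) (i : I) (α : ∀ j, A j → ℝ)
    (ai : A i) : ℝ :=
  mixedPayoff g i (Function.update α i (pureAction ai))

/-- The set `𝒜^MI` of myopically indifferent mixed action profiles. -/
def MIset (g : I → (∀ i, A i) → ℝ) : Set (∀ i, A i → ℝ) :=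
  {α | IsMixed α ∧ ∀ i, ∀ ai : A i, 0 < α i ai → devPayoff g i α ai = mixedPayoff g i α}

/-- Nash equilibrium of the stage game (in mixed strategies). -/
def IsStageNash (g : I → (∀ i, A i) → ℝ) (α : ∀ i, A i → ℝ) : Prop :=
  IsMixed α ∧ ∀ (i : I) (ai : A i), devPayoff g i α ai ≤ mixedPayoff g i α

end StageGame

section Repeated

variable {I : Type*} [Fintype I] [DecidableEq I]
variable {A : I → Type*} [∀ i, Fintype (A i)] [∀ i, DecidableEq (A i)] [∀ i, Nonempty (A i)]

/-- A behavioral strategy profile is valid if, after each history (a finite list of pure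
action profiles, most recent first), every player's prescribed mixing is a probability
vector. -/
def ValidStrat (σ : ∀ i : I, List (∀ j, A j) → A i → ℝ) : Prop :=
  ∀ i h, (∀ a, 0 ≤ σ i h a) ∧ (∑ a, σ i h a) = 1

/-- Probability of a finite history (most recent action profile first) under `σ`. -/
noncomputable def histProb (σ : ∀ i : I, List (∀ j, A j) → A i → ℝ) :
    List (∀ j, A j) → ℝ
  | [] => 1
  | a :: h => (∏ i, σ i h (a i)) * histProb σ h

/-- Expected reward of player `i` in round `t + 1` under `σ`. -/
noncomputable def expReward (g : I → (∀ i, A i) → ℝ)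
    (σ : ∀ i : I, List (∀ j, A j) → A i → ℝ) (i : I) (t : ℕ) : ℝ :=
  ∑ v : Fin (t + 1) → (∀ j, A j), histProb σ (List.ofFn v) * g i (v 0)

/-- Average discounted payoff of player `i` under `σ` at discount factor vector `δ`. -/
noncomputable def payoff (g : I → (∀ i, A i) → ℝ)
    (σ : ∀ i : I, List (∀ j, A j) → A i → ℝ) (δ : I → ℝ) (i : I) : ℝ :=
  (1 - δ i) * ∑' t : ℕ, δ i ^ t * expReward g σ i t

/-- `σ` is a Nash equilibrium of the repeated game at `δ`. -/
def IsNash (g : I → (∀ i, A i) → ℝ)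
    (σ : ∀ i : I, List (∀ j, A j) → A i → ℝ) (δ : I → ℝ) : Prop :=
  ValidStrat σ ∧
    ∀ (i : I) (τ : List (∀ j, A j) → A i → ℝ),
      (∀ h, (∀ a, 0 ≤ τ h a) ∧ (∑ a, τ h a) = 1) →
      payoff g (Function.update σ i τ) δ i ≤ payoff g σ δ i

/-- The continuation strategy profile after history `h`. -/
def contStrat (σ : ∀ i : I, List (∀ j, A j) → A i → ℝ) (h : List (∀ j, A j)) :
    ∀ i : I, List (∀ j, A j) → A i → ℝ :=
  fun i h' => σ i (h' ++ h)

/-- `σ` is a subgame-perfect Nash equilibrium at `δ`. -/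
def IsSPNE (g : I → (∀ i, A i) → ℝ)
    (σ : ∀ i : I, List (∀ j, A j) → A i → ℝ) (δ : I → ℝ) : Prop :=
  ∀ h : List (∀ j, A j), IsNash g (contStrat σ h) δ

/-- `σ` is a Blackwell SPNE above `δlow`: an SPNE at every discount factor vector all of
whose components lie in `[δlow, 1)`. -/
def IsBlackwellSPNE (g : I → (∀ i, A i) → ℝ)
    (σ : ∀ i : I, List (∀ j, A j) → A i → ℝ) (δlow : ℝ) : Prop :=
  ∀ δ : I → ℝ, (∀ i, δlow ≤ δ i ∧ δ i < 1) → IsSPNE g σ δ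

end Repeated

section AuxProofs

open FormalMultilinearSeries in
lemma coeff_zero_of_tsum_eq_zero {c : ℕ → ℝ} {C δlow : ℝ} (h0 : 0 ≤ δlow) (h1 : δlow < 1)
    (hC : ∀ t, |c t| ≤ C)
    (hz : ∀ x : ℝ, δlow ≤ x → x < 1 → ∑' t : ℕ, c t * x ^ t = 0) : c 0 = 0 := by
  set p := ofScalars ℝ c with hp
  have hrad : ((1 : NNReal) : ENNReal) ≤ p.radius := by
    apply p.le_radius_of_bound C
    intro n
    rw [hp, ofScalars_norm]
    simpa using hC n
  have hball : HasFPowerSeriesOnBall p.sum p 0 p.radius :=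
    p.hasFPowerSeriesOnBall (lt_of_lt_of_le (by simp) hrad)
  have hsub : Metric.ball (0:ℝ) 1 ⊆ Metric.eball (0:ℝ) p.radius := by
    rw [show Metric.ball (0:ℝ) 1 = Metric.eball (0:ℝ) ((1 : NNReal) : ENNReal) from
      (Metric.emetric_ball_nnreal (ε := 1)).symm]
    exact Metric.eball_subset_eball hrad
  have hAn : AnalyticOnNhd ℝ p.sum (Metric.ball (0:ℝ) 1) :=
    fun y hy => hball.analyticAt_of_mem (by simpa using hsub hy)
  set z₀ : ℝ := (δlow + 1)/2 with hz₀def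
  have hz₀Ioo : z₀ ∈ Set.Ioo δlow 1 := ⟨by rw [hz₀def]; linarith, by rw [hz₀def]; linarith⟩
  have hmem : z₀ ∈ Metric.ball (0:ℝ) 1 := by
    rw [Metric.mem_ball, dist_zero_right, Real.norm_eq_abs,
      abs_of_nonneg (by rw [hz₀def]; linarith)]
    exact hz₀Ioo.2
  have hsum_eq : ∀ x : ℝ, p.sum x = ∑' t : ℕ, c t * x ^ t := by
    intro x
    have := ofScalars_sum_eq (E := ℝ) c x
    simpa [smul_eq_mul, ofScalarsSum] using this
  have hev : p.sum =ᶠ[nhds z₀] 0 := by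
    filter_upwards [isOpen_Ioo.mem_nhds hz₀Ioo] with x hx
    rw [hsum_eq x]
    exact hz x hx.1.le hx.2
  have hEq := hAn.eqOn_zero_of_preconnected_of_eventuallyEq_zero
    (convex_ball (0:ℝ) 1).isPreconnected hmem hev
  have h00 : p.sum 0 = 0 := hEq (Metric.mem_ball_self one_pos)
  rw [hsum_eq 0] at h00
  rw [← h00]
  rw [tsum_eq_single 0 (by intro t ht; simp [zero_pow ht])]
  simp

variable {I : Type*} [Fintype I] [DecidableEq I]
variable {A : I → Type*} [∀ i, Fintype (A i)] [∀ i, DecidableEq (A i)] [∀ i, Nonempty (A i)]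

lemma sum_prod_pi (f : ∀ i, A i → ℝ) :
    ∑ a : ∀ i, A i, ∏ i, f i (a i) = ∏ i, ∑ x, f i x := by
  rw [Finset.prod_univ_sum]
  rw [Fintype.piFinset_univ]

lemma histProb_nonneg {σ : ∀ i : I, List (∀ j, A j) → A i → ℝ} (hσ : ValidStrat σ) :
    ∀ l, 0 ≤ histProb σ l := by
  intro l
  induction l with
  | nil => simp [histProb]
  | cons a h ih =>
    exact mul_nonneg (Finset.prod_nonneg fun j _ => (hσ j h).1 (a j)) ih

lemma sum_histProb {σ : ∀ i : I, List (∀ j, A j) → A i → ℝ} (hσ : ValidStrat σ) :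
    ∀ t : ℕ, ∑ v : Fin t → (∀ j, A j), histProb σ (List.ofFn v) = 1 := by
  intro t
  induction t with
  | zero => simp [histProb, List.ofFn_zero]
  | succ t ih =>
    rw [← (Fin.consEquiv (fun _ : Fin (t+1) => ∀ j, A j)).sum_comp
      (fun v => histProb σ (List.ofFn v))]
    rw [Fintype.sum_prod_type]
    have : ∀ (a : ∀ j, A j) (w : Fin t → ∀ j, A j),
        histProb σ (List.ofFn ((Fin.consEquiv (fun _ : Fin (t+1) => ∀ j, A j)) (a, w)))
          = (∏ j, σ j (List.ofFn w) (a j)) * histProb σ (List.ofFn w) := by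
      intro a w
      have hofn : List.ofFn ((Fin.consEquiv (fun _ : Fin (t+1) => ∀ j, A j)) (a, w))
          = a :: List.ofFn w := by
        rw [List.ofFn_succ]
        congr 1
      rw [hofn, histProb]
    simp only [this]
    have hswap : ∀ w : Fin t → ∀ j, A j,
        ∑ a : ∀ j, A j, (∏ j, σ j (List.ofFn w) (a j)) * histProb σ (List.ofFn w)
          = histProb σ (List.ofFn w) := by
      intro w
      rw [← Finset.sum_mul, sum_prod_pi]
      have : ∀ j : I, ∑ x, σ j (List.ofFn w) x = 1 := fun j => (hσ j (List.ofFn w)).2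
      simp [this]
    rw [Finset.sum_comm]
    simp only [hswap]
    exact ih

lemma abs_expReward_le {g : I → (∀ i, A i) → ℝ} {σ : ∀ i : I, List (∀ j, A j) → A i → ℝ}
    (hσ : ValidStrat σ) (i : I) {M : ℝ} (hM : ∀ a, |g i a| ≤ M) (t : ℕ) :
    |expReward g σ i t| ≤ M := by
  have hMn : 0 ≤ M := le_trans (abs_nonneg _) (hM (Classical.arbitrary _))
  calc |expReward g σ i t|
      ≤ ∑ v : Fin (t+1) → (∀ j, A j), |histProb σ (List.ofFn v) * g i (v 0)| :=
        Finset.abs_sum_le_sum_abs _ _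
    _ ≤ ∑ v : Fin (t+1) → (∀ j, A j), histProb σ (List.ofFn v) * M := by
        apply Finset.sum_le_sum
        intro v _
        rw [abs_mul, abs_of_nonneg (histProb_nonneg hσ _)]
        exact mul_le_mul_of_nonneg_left (hM _) (histProb_nonneg hσ _)
    _ = M := by rw [← Finset.sum_mul, sum_histProb hσ, one_mul]

lemma histProb_append_singleton (σ : ∀ i : I, List (∀ j, A j) → A i → ℝ)
    (l : List (∀ j, A j)) (a : ∀ j, A j) :
    histProb σ (l ++ [a]) = histProb (contStrat σ [a]) l * ((∏ j, σ j [] (a j))) := by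
  induction l with
  | nil => simp [histProb]
  | cons x l ih =>
    rw [List.cons_append, histProb, ih, histProb]
    rw [show (∏ j, σ j (l ++ [a]) (x j)) = ∏ j, (contStrat σ [a]) j l (x j) from rfl]
    ring

/-- replace the round-1 (empty-history) mixing of a single-player strategy -/
def updFirst {i : I} (τ : List (∀ j, A j) → A i → ℝ) (β : A i → ℝ) :
    List (∀ j, A j) → A i → ℝ :=
  fun h => if h = [] then β else τ h

lemma updFirst_self {i : I} (τ : List (∀ j, A j) → A i → ℝ) : updFirst τ (τ []) = τ := by
  funext h
  unfold updFirst
  split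
  · subst ‹h = []›; rfl
  · rfl

lemma contStrat_update_updFirst (σ : ∀ i : I, List (∀ j, A j) → A i → ℝ) (i : I)
    (β : A i → ℝ) (a : ∀ j, A j) :
    contStrat (Function.update σ i (updFirst (σ i) β)) [a] = contStrat σ [a] := by
  funext j h'
  unfold contStrat
  rcases eq_or_ne j i with rfl | hne
  · rw [Function.update_self]
    unfold updFirst
    rw [if_neg (by simp)]
  · rw [Function.update_of_ne hne]

lemma expReward_update_eq (g : I → (∀ i, A i) → ℝ)
    (σ : ∀ i : I, List (∀ j, A j) → A i → ℝ) (i : I) (β : A i → ℝ) (t : ℕ) :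
    expReward g (Function.update σ i (updFirst (σ i) β)) i t
      = ∑ v : Fin (t+1) → (∀ j, A j), β (v (Fin.last t) i) *
          ((∏ j ∈ Finset.univ.erase i, σ j [] (v (Fin.last t) j)) *
            (histProb (contStrat σ [v (Fin.last t)]) (List.ofFn fun s : Fin t => v s.castSucc) *
              g i (v 0))) := by
  unfold expReward
  apply Finset.sum_congr rfl
  intro v _
  set σβ := Function.update σ i (updFirst (σ i) β) with hσβ
  have hofn : List.ofFn v = (List.ofFn fun s : Fin t => v s.castSucc) ++ [v (Fin.last t)] := by
    rw [List.ofFn_succ']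
    rw [List.concat_eq_append]
  rw [hofn, histProb_append_singleton, contStrat_update_updFirst]
  have hprod : (∏ j, σβ j [] (v (Fin.last t) j))
      = β (v (Fin.last t) i) * ∏ j ∈ Finset.univ.erase i, σ j [] (v (Fin.last t) j) := by
    rw [← Finset.mul_prod_erase Finset.univ _ (Finset.mem_univ i)]
    congr 1
    · rw [hσβ, Function.update_self]
      rfl
    · apply Finset.prod_congr rfl
      intro j hj
      rw [hσβ, Function.update_of_ne (Finset.ne_of_mem_erase hj)]
  rw [hprod]
  ring

lemma expReward_update_linear (g : I → (∀ i, A i) → ℝ)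
    (σ : ∀ i : I, List (∀ j, A j) → A i → ℝ) (i : I) (β : A i → ℝ) (t : ℕ) :
    expReward g (Function.update σ i (updFirst (σ i) β)) i t
      = ∑ b : A i, β b *
          expReward g (Function.update σ i (updFirst (σ i) (pureAction b))) i t := by
  rw [expReward_update_eq]
  have : ∀ b, expReward g (Function.update σ i (updFirst (σ i) (pureAction b))) i t
      = ∑ v : Fin (t+1) → (∀ j, A j), pureAction b (v (Fin.last t) i) *
          ((∏ j ∈ Finset.univ.erase i, σ j [] (v (Fin.last t) j)) *
            (histProb (contStrat σ [v (Fin.last t)]) (List.ofFn fun s : Fin t => v s.castSucc) *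
              g i (v 0))) := fun b => expReward_update_eq g σ i (pureAction b) t
  simp only [this, Finset.mul_sum]
  rw [Finset.sum_comm]
  apply Finset.sum_congr rfl
  intro v _
  simp only [← mul_assoc, ← Finset.sum_mul]
  congr 1
  unfold pureAction
  simp

lemma expReward_zero (g : I → (∀ i, A i) → ℝ)
    (σ : ∀ i : I, List (∀ j, A j) → A i → ℝ) (i : I) :
    expReward g σ i 0 = mixedPayoff g i (fun j => σ j []) := by
  unfold expReward mixedPayoff
  rw [← (Equiv.funUnique (Fin 1) (∀ j, A j)).symm.sum_comp
    (fun v : Fin 1 → ∀ j, A j => histProb σ (List.ofFn v) * g i (v 0))]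
  apply Finset.sum_congr rfl
  intro a _
  have : List.ofFn ((Equiv.funUnique (Fin 1) (∀ j, A j)).symm a) = [a] := by
    simp [Equiv.funUnique]
  rw [this, histProb, histProb]
  simp [Equiv.funUnique]

end AuxProofs

/-- In a Blackwell SPNE, after every history the prescribed mixed action
profile is myopically indifferent. -/
theorem blackwell_spne_plays_MI
    {I : Type*} [Fintype I] [DecidableEq I]
    {A : I → Type*} [∀ i, Fintype (A i)] [∀ i, DecidableEq (A i)] [∀ i, Nonempty (A i)]
    (g : I → (∀ i, A i) → ℝ)
    (σ : ∀ i : I, List (∀ j, A j) → A i → ℝ)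
    (δlow : ℝ) (h0 : 0 ≤ δlow) (h1 : δlow < 1)
    (hB : IsBlackwellSPNE g σ δlow) :
    ∀ h : List (∀ j, A j), (fun i => σ i h) ∈ MIset g := by
  intro h
  set σ' : ∀ i : I, List (∀ j, A j) → A i → ℝ := contStrat σ h with hσ'
  have hNash : ∀ δ : I → ℝ, (∀ i, δlow ≤ δ i ∧ δ i < 1) → IsNash g σ' δ :=
    fun δ hδ => hB δ hδ h
  have hval : ValidStrat σ' := (hNash (fun _ => δlow) (fun _ => ⟨le_refl _, h1⟩)).1
  have hα : (fun i => σ i h) = fun j => σ' j [] := rfl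
  rw [hα]
  refine ⟨fun j => hval j [], ?_⟩
  intro i a ha
  -- notation
  set α : ∀ j, A j → ℝ := fun j => σ' j [] with hαdef
  obtain ⟨M, hM⟩ : ∃ M, ∀ a, |g i a| ≤ M :=
    ⟨∑ a, |g i a|, fun a => Finset.single_le_sum (f := fun a => |g i a|)
      (fun _ _ => abs_nonneg _) (Finset.mem_univ a)⟩
  have hMn : 0 ≤ M := le_trans (abs_nonneg _) (hM (Classical.arbitrary _))
  -- validity of the one-shot pure deviations
  have hτval : ∀ b : A i, ∀ h' : List (∀ j, A j),
      (∀ x, 0 ≤ updFirst (σ' i) (pureAction b) h' x) ∧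
        (∑ x, updFirst (σ' i) (pureAction b) h' x) = 1 := by
    intro b h'
    unfold updFirst
    by_cases hh : h' = []
    · rw [if_pos hh]
      constructor
      · intro x; unfold pureAction; split <;> norm_num
      · unfold pureAction; simp
    · rw [if_neg hh]
      exact hval i h'
  have hvalupd : ∀ b : A i, ValidStrat (Function.update σ' i (updFirst (σ' i) (pureAction b))) := by
    intro b j h'
    rcases eq_or_ne j i with rfl | hne
    · rw [Function.update_self]
      exact hτval b h'
    · rw [Function.update_of_ne hne]
      exact hval j h'
  -- the deviation expected rewards
  set E : A i → ℕ → ℝ :=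
    fun b t => expReward g (Function.update σ' i (updFirst (σ' i) (pureAction b))) i t with hE
  have hEbound : ∀ b t, |E b t| ≤ M := fun b t => abs_expReward_le (hvalupd b) i hM t
  have hExpbound : ∀ t, |expReward g σ' i t| ≤ M := fun t => abs_expReward_le hval i hM t
  have hdecomp : ∀ t, expReward g σ' i t = ∑ b, α i b * E b t := by
    intro t
    have := expReward_update_linear g σ' i (σ' i []) t
    rwa [updFirst_self, Function.update_eq_self] at this
  -- summability
  have hsumE : ∀ (b : A i) (x : ℝ), 0 ≤ x → x < 1 → Summable (fun t : ℕ => x ^ t * E b t) := by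
    intro b x hx0 hx1
    apply Summable.of_norm_bounded (g := fun t => M * x ^ t)
      ((summable_geometric_of_lt_one hx0 hx1).mul_left M)
    intro t
    rw [Real.norm_eq_abs, abs_mul, abs_pow, abs_of_nonneg hx0, mul_comm]
    exact mul_le_mul_of_nonneg_right (hEbound b t) (pow_nonneg hx0 t)
  have hsumExp : ∀ (x : ℝ), 0 ≤ x → x < 1 → Summable (fun t : ℕ => x ^ t * expReward g σ' i t) := by
    intro x hx0 hx1
    apply Summable.of_norm_bounded (g := fun t => M * x ^ t)
      ((summable_geometric_of_lt_one hx0 hx1).mul_left M)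
    intro t
    rw [Real.norm_eq_abs, abs_mul, abs_pow, abs_of_nonneg hx0, mul_comm]
    exact mul_le_mul_of_nonneg_right (hExpbound t) (pow_nonneg hx0 t)
  -- the key indifference identity at every admissible discount factor
  have hkey : ∀ x : ℝ, δlow ≤ x → x < 1 →
      (∑' t : ℕ, x ^ t * E a t) = ∑' t : ℕ, x ^ t * expReward g σ' i t := by
    intro x hxlow hx1
    have hx0 : 0 ≤ x := le_trans h0 hxlow
    set δ : I → ℝ := fun _ => x with hδ
    have hN := hNash δ (fun _ => ⟨hxlow, hx1⟩)
    have hle : ∀ b : A i, (∑' t : ℕ, x ^ t * E b t) ≤ ∑' t : ℕ, x ^ t * expReward g σ' i t := by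
      intro b
      have := hN.2 i (updFirst (σ' i) (pureAction b)) (hτval b)
      unfold payoff at this
      have h1x : (0:ℝ) < 1 - x := by linarith
      have := le_of_mul_le_mul_left (by
        calc (1 - x) * ∑' t : ℕ, x ^ t * E b t
            = (1 - δ i) * ∑' t : ℕ, δ i ^ t * E b t := by rfl
          _ ≤ (1 - δ i) * ∑' t : ℕ, δ i ^ t * expReward g σ' i t := this
          _ = (1 - x) * ∑' t : ℕ, x ^ t * expReward g σ' i t := by rfl) h1x
      exact this
    have hmix : (∑' t : ℕ, x ^ t * expReward g σ' i t)
        = ∑ b, α i b * ∑' t : ℕ, x ^ t * E b t := by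
      calc (∑' t : ℕ, x ^ t * expReward g σ' i t)
          = ∑' t : ℕ, ∑ b, α i b * (x ^ t * E b t) := by
            apply tsum_congr
            intro t
            rw [hdecomp t, Finset.mul_sum]
            apply Finset.sum_congr rfl
            intro b _
            ring
        _ = ∑ b, ∑' t : ℕ, α i b * (x ^ t * E b t) :=
            Summable.tsum_finsetSum (fun b _ => (hsumE b x hx0 hx1).mul_left _)
        _ = ∑ b, α i b * ∑' t : ℕ, x ^ t * E b t := by
            apply Finset.sum_congr rfl
            intro b _
            rw [tsum_mul_left]
    -- support actions attain the maximum
    have hzero : ∑ b, α i b * ((∑' t : ℕ, x ^ t * expReward g σ' i t)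
        - ∑' t : ℕ, x ^ t * E b t) = 0 := by
      simp only [mul_sub]
      rw [Finset.sum_sub_distrib, ← Finset.sum_mul, (hval i []).2, one_mul, ← hmix, sub_self]
    have hnonneg : ∀ b ∈ Finset.univ, 0 ≤ α i b * ((∑' t : ℕ, x ^ t * expReward g σ' i t)
        - ∑' t : ℕ, x ^ t * E b t) := fun b _ =>
      mul_nonneg ((hval i []).1 b) (by linarith [hle b])
    have := (Finset.sum_eq_zero_iff_of_nonneg hnonneg).mp hzero a (Finset.mem_univ a)
    rcases mul_eq_zero.mp this with hc | hc
    · exact absurd hc (ne_of_gt ha)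
    · linarith [sub_eq_zero.mp hc]
  -- extract the first coefficient
  have hc0 : E a 0 - expReward g σ' i 0 = 0 := by
    have := coeff_zero_of_tsum_eq_zero (c := fun t => E a t - expReward g σ' i t)
      (C := M + M) h0 h1 (fun t => by
        calc |E a t - expReward g σ' i t| ≤ |E a t| + |expReward g σ' i t| := abs_sub _ _
          _ ≤ M + M := add_le_add (hEbound a t) (hExpbound t))
      (fun x hxlow hx1 => by
        have hx0 : 0 ≤ x := le_trans h0 hxlow
        have : (∑' t : ℕ, (E a t - expReward g σ' i t) * x ^ t)
            = (∑' t : ℕ, x ^ t * E a t) - ∑' t : ℕ, x ^ t * expReward g σ' i t := by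
          rw [← Summable.tsum_sub (hsumE a x hx0 hx1) (hsumExp x hx0 hx1)]
          apply tsum_congr
          intro t
          ring
        rw [this, hkey x hxlow hx1, sub_self])
    exact this
  -- identify the two sides
  have hE0 : E a 0 = devPayoff g i α a := by
    show expReward g (Function.update σ' i (updFirst (σ' i) (pureAction a))) i 0 = _
    rw [expReward_zero]
    unfold devPayoff
    congr 1
    funext j
    rcases eq_or_ne j i with rfl | hne
    · rw [Function.update_self, Function.update_self]
      rfl
    · rw [Function.update_of_ne hne, Function.update_of_ne hne]
  have hmix0 : expReward g σ' i 0 = mixedPayoff g i α := expReward_zero g σ' i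
  rw [← hE0, ← hmix0]
  linarith [hc0]
end

section
/- Patience Lemma: let δ ∈ (0,1), let (x_t)_{t∈ℕ} be a bounded sequence of real numbers, and let x̲, x̄ ∈ ℝ. If x̲ ≤ (1−δ) Σ_{t=τ}^∞ δ^{t−τ} x_t ≤ x̄ for every τ ≥ 0, then for every δ' ∈ (δ,1) it also holds that x̲ ≤ (1−δ') Σ_{t=τ}^∞ δ'^{t−τ} x_t ≤ x̄ for every τ ≥ 0. -/
lemma pat_summable (r : ℝ) (hr0 : 0 ≤ r) (hr1 : r < 1) (C : ℝ) (y : ℕ → ℝ)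
    (hy : ∀ t, |y t| ≤ C) : Summable (fun t => r ^ t * y t) := by
  apply Summable.of_norm_bounded
    ((summable_geometric_of_lt_one hr0 hr1).mul_left C)
  intro t
  rw [Real.norm_eq_abs, abs_mul, abs_pow, abs_of_nonneg hr0, mul_comm]
  exact mul_le_mul_of_nonneg_right (hy t) (pow_nonneg hr0 t)

lemma pat_shift (r : ℝ) (hr0 : 0 ≤ r) (hr1 : r < 1) (C : ℝ) (y : ℕ → ℝ)
    (hy : ∀ t, |y t| ≤ C) :
    ∑' t : ℕ, r ^ t * y t = y 0 + r * ∑' t : ℕ, r ^ t * y (t + 1) := by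
  have h1 := Summable.tsum_eq_zero_add (pat_summable r hr0 hr1 C y hy)
  simp only [pow_zero, one_mul] at h1
  rw [h1]
  congr 1
  have : ∀ t : ℕ, r ^ (t + 1) * y (t + 1) = r * (r ^ t * y (t + 1)) := by
    intro t; ring
  rw [tsum_congr this, tsum_mul_left]

/-- **Patience Lemma.** If every `δ`-discounted continuation value of a
bounded real sequence lies in `[x̲, x̄]`, the same is true at every higher discount
factor `δ' ∈ (δ, 1)`. -/
theorem patience_lemma (δ : ℝ) (hδ0 : 0 < δ) (hδ1 : δ < 1)
    (x : ℕ → ℝ) (hbdd : ∃ M : ℝ, ∀ t, |x t| ≤ M)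
    (xlo xhi : ℝ)
    (h : ∀ τ : ℕ, xlo ≤ (1 - δ) * ∑' t : ℕ, δ ^ t * x (τ + t) ∧
        (1 - δ) * ∑' t : ℕ, δ ^ t * x (τ + t) ≤ xhi) :
    ∀ δ' : ℝ, δ < δ' → δ' < 1 →
      ∀ τ : ℕ, xlo ≤ (1 - δ') * ∑' t : ℕ, δ' ^ t * x (τ + t) ∧
        (1 - δ') * ∑' t : ℕ, δ' ^ t * x (τ + t) ≤ xhi := by
  obtain ⟨M, hM⟩ := hbdd
  intro δ' hδδ' hδ'1 τ
  have hδ'0 : 0 < δ' := lt_trans hδ0 hδδ'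
  set V : ℕ → ℝ := fun n => (1 - δ) * ∑' t : ℕ, δ ^ t * x (n + t) with hVdef
  have hVb : ∀ n, xlo ≤ V n ∧ V n ≤ xhi := h
  set C : ℝ := max |xlo| |xhi| with hCdef
  have hVC : ∀ n, |V n| ≤ C := by
    intro n
    rw [abs_le]
    constructor
    · calc -C ≤ -|xlo| := by simp [hCdef]
        _ ≤ xlo := neg_abs_le xlo
        _ ≤ V n := (hVb n).1
    · calc V n ≤ xhi := (hVb n).2
        _ ≤ |xhi| := le_abs_self xhi
        _ ≤ C := le_max_right _ _
  -- recursion: (1-δ) * x n = V n - δ * V (n+1)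
  have hrec : ∀ n, (1 - δ) * x n = V n - δ * V (n + 1) := by
    intro n
    have hs := pat_shift δ hδ0.le hδ1 M (fun t => x (n + t)) (fun t => hM _)
    have he : (∑' t : ℕ, δ ^ t * x (n + (t + 1))) = ∑' t : ℕ, δ ^ t * x ((n + 1) + t) := by
      apply tsum_congr
      intro t; rw [show n + (t + 1) = (n + 1) + t from by omega]
    rw [he] at hs
    simp only [hVdef]
    rw [hs]
    generalize (∑' t : ℕ, δ ^ t * x ((n + 1) + t)) = S
    ring_nf
  -- the δ'-weighted sums
  have hA : Summable (fun t => δ' ^ t * V (τ + t)) :=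
    pat_summable δ' hδ'0.le hδ'1 C (fun t => V (τ + t)) (fun t => hVC _)
  have hB : Summable (fun t => δ' ^ t * (δ * V (τ + t + 1))) := by
    apply pat_summable δ' hδ'0.le hδ'1 (δ * C)
    intro t
    rw [abs_mul, abs_of_nonneg hδ0.le]
    exact mul_le_mul_of_nonneg_left (hVC _) hδ0.le
  set B : ℝ := ∑' t : ℕ, δ' ^ t * V (τ + t + 1) with hBdef
  have hshiftA : ∑' t : ℕ, δ' ^ t * V (τ + t) = V τ + δ' * B := by
    have := pat_shift δ' hδ'0.le hδ'1 C (fun t => V (τ + t)) (fun t => hVC _)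
    simpa [hBdef, add_assoc] using this
  -- key identity
  have hkey : (1 - δ) * ∑' t : ℕ, δ' ^ t * x (τ + t) = V τ + (δ' - δ) * B := by
    have h1 : ∀ t : ℕ, (1 - δ) * (δ' ^ t * x (τ + t)) =
        δ' ^ t * V (τ + t) - δ' ^ t * (δ * V (τ + t + 1)) := by
      intro t
      have := hrec (τ + t)
      nlinarith [this, pow_nonneg hδ'0.le t]
    calc (1 - δ) * ∑' t : ℕ, δ' ^ t * x (τ + t)
        = ∑' t : ℕ, (1 - δ) * (δ' ^ t * x (τ + t)) := (tsum_mul_left).symm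
      _ = ∑' t : ℕ, (δ' ^ t * V (τ + t) - δ' ^ t * (δ * V (τ + t + 1))) :=
          tsum_congr h1
      _ = (∑' t : ℕ, δ' ^ t * V (τ + t)) - ∑' t : ℕ, δ' ^ t * (δ * V (τ + t + 1)) :=
          Summable.tsum_sub hA hB
      _ = (V τ + δ' * B) - δ * B := by
          rw [hshiftA]
          congr 1
          have : ∀ t : ℕ, δ' ^ t * (δ * V (τ + t + 1)) = δ * (δ' ^ t * V (τ + t + 1)) := by
            intro t; ring
          rw [tsum_congr this, tsum_mul_left]
      _ = V τ + (δ' - δ) * B := by ring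
  -- bounds on B
  have hgeo : ∑' t : ℕ, (δ' : ℝ) ^ t = (1 - δ')⁻¹ :=
    tsum_geometric_of_lt_one hδ'0.le hδ'1
  have hBsum : Summable (fun t => δ' ^ t * V (τ + t + 1)) :=
    pat_summable δ' hδ'0.le hδ'1 C (fun t => V (τ + t + 1)) (fun t => hVC _)
  have hgeosum : Summable (fun t : ℕ => (δ' : ℝ) ^ t) :=
    summable_geometric_of_lt_one hδ'0.le hδ'1
  have hBhi : B ≤ xhi * (1 - δ')⁻¹ := by
    have : B ≤ ∑' t : ℕ, δ' ^ t * xhi := by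
      apply Summable.tsum_le_tsum _ hBsum (hgeosum.mul_right xhi)
      intro t
      exact mul_le_mul_of_nonneg_left (hVb _).2 (pow_nonneg hδ'0.le t)
    rw [tsum_mul_right, hgeo] at this; linarith
  have hBlo : xlo * (1 - δ')⁻¹ ≤ B := by
    have : (∑' t : ℕ, δ' ^ t * xlo) ≤ B := by
      apply Summable.tsum_le_tsum _ (hgeosum.mul_right xlo) hBsum
      intro t
      exact mul_le_mul_of_nonneg_left (hVb _).1 (pow_nonneg hδ'0.le t)
    rw [tsum_mul_right, hgeo] at this; linarith
  -- finish
  have h1δ : (0:ℝ) < 1 - δ := by linarith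
  have h1δ' : (0:ℝ) < 1 - δ' := by linarith
  have hVτ := hVb τ
  set W : ℝ := ∑' t : ℕ, δ' ^ t * x (τ + t) with hW
  have hBhi' : (1 - δ') * B ≤ xhi := by
    rw [mul_comm]
    calc B * (1 - δ') ≤ xhi * (1 - δ')⁻¹ * (1 - δ') :=
        mul_le_mul_of_nonneg_right hBhi h1δ'.le
      _ = xhi := by field_simp
  have hBlo' : xlo ≤ (1 - δ') * B := by
    rw [mul_comm]
    calc xlo = xlo * (1 - δ')⁻¹ * (1 - δ') := by field_simp
      _ ≤ B * (1 - δ') := mul_le_mul_of_nonneg_right hBlo h1δ'.le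
  constructor
  · nlinarith [hkey, hVτ.1, hBlo', mul_pos h1δ h1δ', sub_nonneg.2 hδδ'.le]
  · nlinarith [hkey, hVτ.2, hBhi', mul_pos h1δ h1δ', sub_nonneg.2 hδδ'.le]
end

section
/- Exact discounted representation with controlled continuations (Dasgupta–Ghosh): let A be a finite nonempty set, g : A → ℝ^n, F := convexHull(g(A)), v ∈ F, and ε > 0. Then there exists δ̂ ∈ (0,1) such that for every δ ∈ [δ̂,1) there is a sequence (a^{(t)})_{t∈ℕ} of elements of A satisfying v = (1−δ) Σ_{t=0}^∞ δ^t g(a^{(t)}) and, for every τ ≥ 1, ‖(1−δ) Σ_{t=τ}^∞ δ^{t−τ} g(a^{(t)}) − v‖ ≤ ε. -/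
open Finset
set_option linter.unusedSectionVars false

section DG

variable {ι : Type*} [Fintype ι] [Nonempty ι]

/-- pick a maximizer of `e` among indices with positive weight. -/
noncomputable def dgPick (l e : ι → ℝ) : ι :=
  if h : ((univ : Finset ι).filter (fun i => 0 < l i)).Nonempty then
    Classical.choose (Finset.exists_max_image _ e h)
  else Classical.arbitrary ι

lemma dgPick_spec {l : ι → ℝ} (e : ι → ℝ)
    (h : ((univ : Finset ι).filter (fun i => 0 < l i)).Nonempty) :
    0 < l (dgPick l e) ∧ ∀ i, 0 < l i → e i ≤ e (dgPick l e) := by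
  rw [dgPick, dif_pos h]
  obtain ⟨hmem, hmax⟩ := Classical.choose_spec (Finset.exists_max_image _ e h)
  refine ⟨(mem_filter.1 hmem).2, fun i hi => hmax i (mem_filter.2 ⟨mem_univ _, hi⟩)⟩

open scoped Classical in
noncomputable def dgStep (l : ι → ℝ) (δ : ℝ) (e : ι → ℝ) : ι → ℝ :=
  fun i => (e i + l i - if i = dgPick l e then 1 else 0) / δ

noncomputable def dgE (l : ι → ℝ) (δ : ℝ) : ℕ → ι → ℝ :=
  fun t => (dgStep l δ)^[t] 0

noncomputable def dgSeq (l : ι → ℝ) (δ : ℝ) (t : ℕ) : ι := dgPick l (dgE l δ t)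

lemma dgE_zero (l : ι → ℝ) (δ : ℝ) : dgE l δ 0 = 0 := rfl

lemma dgE_succ (l : ι → ℝ) (δ : ℝ) (t : ℕ) :
    dgE l δ (t + 1) = dgStep l δ (dgE l δ t) :=
  Function.iterate_succ_apply' _ _ _

/-- The invariant. -/
def dgInv (l : ι → ℝ) (B : ℝ) (e : ι → ℝ) : Prop :=
  (∀ i, l i = 0 → e i = 0) ∧ (∀ i, -2 ≤ e i) ∧ (∑ i, max (e i) 0) ≤ B ∧ (∑ i, e i) = 0

end DG

section DG2

open scoped Classical

variable {ι : Type*} [Fintype ι] [Nonempty ι]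

lemma dg_max_div (x δ : ℝ) (hδ : 0 < δ) : max (x / δ) 0 = max x 0 / δ := by
  rcases le_total x 0 with h | h
  · rw [max_eq_right (div_nonpos_of_nonpos_of_nonneg h hδ.le), max_eq_right h, zero_div]
  · rw [max_eq_left (div_nonneg h hδ.le), max_eq_left h]

lemma dg_max_neg (x : ℝ) : max (-x) 0 = max x 0 - x := by
  rcases le_total x 0 with h | h
  · rw [max_eq_left (neg_nonneg.2 h), max_eq_right h]; ring
  · rw [max_eq_right (neg_nonpos.2 h), max_eq_left h]; ring

lemma dg_aux1 (x l : ℝ) (hl : 0 ≤ l) :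
    max (x + l) 0 ≤ max x 0 + l - min l (max (-x) 0) := by
  rcases le_total 0 x with h | h
  · rw [max_eq_left h, max_eq_right (neg_nonpos.2 h), min_eq_right hl,
      max_eq_left (by linarith : (0:ℝ) ≤ x + l)]
    linarith
  · rw [max_eq_right h, max_eq_left (neg_nonneg.2 h)]
    rcases le_total (-x) l with h2 | h2
    · rw [min_eq_right h2, max_eq_left (by linarith : (0:ℝ) ≤ x + l)]; linarith
    · rw [min_eq_left h2, max_eq_right (by linarith : x + l ≤ 0)]; linarith

lemma dg_aux2 {y c l : ℝ} (hc : 0 < c) (hc1 : c ≤ 1) (hl : c ≤ l) (hy : 0 ≤ y) (hy2 : y ≤ 2) :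
    c / 2 * y ≤ min l y := by
  rcases le_total y l with h | h
  · rw [min_eq_right h]; nlinarith
  · rw [min_eq_left h]; nlinarith

lemma dg_exists_pos {l : ι → ℝ} (hl0 : ∀ i, 0 ≤ l i) (hl1 : ∑ i, l i = 1) :
    ((univ : Finset ι).filter (fun i => 0 < l i)).Nonempty := by
  by_contra h
  rw [Finset.not_nonempty_iff_eq_empty, Finset.filter_eq_empty_iff] at h
  have : ∀ i ∈ (univ : Finset ι), l i = 0 := fun i hi =>
    le_antisymm (not_lt.1 (h hi)) (hl0 i)
  rw [Finset.sum_congr rfl this, Finset.sum_const_zero] at hl1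
  norm_num at hl1

lemma dgInv_step {l : ι → ℝ} {c δ : ℝ} (hl0 : ∀ i, 0 ≤ l i) (hl1 : ∑ i, l i = 1)
    (hc : 0 < c) (hc1 : c ≤ 1) (hcl : ∀ i, 0 < l i → c ≤ l i)
    (hδ : 1 - c / 4 ≤ δ) (hδ1 : δ < 1) {e : ι → ℝ} (he : dgInv l (4 / c) e) :
    dgInv l (4 / c) (dgStep l δ e) := by
  obtain ⟨h0, h2, hS, hsum⟩ := he
  have hδ0 : (0:ℝ) < δ := by linarith
  have hfne := dg_exists_pos hl0 hl1
  obtain ⟨hps, hpm⟩ := dgPick_spec (l := l) e hfne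
  set p := dgPick l e with hp
  have hstep : ∀ i, dgStep l δ e i = (e i + l i - if i = p then 1 else 0) / δ := by
    intro i; rw [dgStep, ← hp]
  -- the maximizer has nonnegative value
  have hestar : 0 ≤ e p := by
    by_contra hneg
    push_neg at hneg
    have hfe : ∑ i ∈ (univ : Finset ι).filter (fun i => 0 < l i), e i = 0 := by
      have h' := Finset.sum_filter_add_sum_filter_not (univ : Finset ι) (fun i => 0 < l i) e
      have hz : ∑ i ∈ (univ : Finset ι).filter (fun i => ¬ 0 < l i), e i = 0 := by
        apply Finset.sum_eq_zero
        intro i hi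
        exact h0 i (le_antisymm (not_lt.1 (mem_filter.1 hi).2) (hl0 i))
      rw [hz] at h'
      linarith [h', hsum]
    have hlt : ∑ i ∈ (univ : Finset ι).filter (fun i => 0 < l i), e i <
        ∑ i ∈ (univ : Finset ι).filter (fun i => 0 < l i), (0:ℝ) := by
      apply Finset.sum_lt_sum_of_nonempty hfne
      intro i hi
      exact lt_of_le_of_lt (hpm i (mem_filter.1 hi).2) hneg
    rw [Finset.sum_const_zero, hfe] at hlt
    exact lt_irrefl _ hlt
  have hl_le_one : ∀ i, l i ≤ 1 := by
    intro i
    rw [← hl1]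
    exact Finset.single_le_sum (fun j _ => hl0 j) (mem_univ i)
  refine ⟨?_, ?_, ?_, ?_⟩
  · -- zero weights stay zero
    intro i hi
    have hne : i ≠ p := by intro h; rw [h] at hi; exact absurd hi (ne_of_gt hps)
    rw [hstep i, if_neg hne, hi, h0 i hi]
    norm_num
  · -- lower bound
    intro i
    rw [hstep i, le_div_iff₀ hδ0]
    by_cases hip : i = p
    · rw [if_pos hip, hip]
      have := hl0 p
      linarith
    · rw [if_neg hip]
      by_cases hli : l i = 0
      · rw [h0 i hli, hli]; linarith
      · have : c ≤ l i := hcl i (lt_of_le_of_ne (hl0 i) (Ne.symm hli))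
        have := h2 i
        linarith
  · -- main sum bound
    have hrw : ∑ i, max (dgStep l δ e i) 0
        = (∑ i, max (e i + l i - if i = p then 1 else 0) 0) / δ := by
      rw [Finset.sum_div]
      apply Finset.sum_congr rfl
      intro i _
      rw [hstep i, dg_max_div _ _ hδ0]
    rw [hrw]
    set S := ∑ i, max (e i) 0 with hSdef
    have hS0 : 0 ≤ S := Finset.sum_nonneg fun i _ => le_max_right _ _
    have hneg_sum : ∑ i, max (-(e i)) 0 = S := by
      rw [hSdef]
      rw [Finset.sum_congr rfl (fun i _ => dg_max_neg (e i)), Finset.sum_sub_distrib, hsum,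
        sub_zero]
    have hmin_sum : c / 2 * S ≤ ∑ i, min (l i) (max (-(e i)) 0) := by
      rw [← hneg_sum, Finset.mul_sum]
      apply Finset.sum_le_sum
      intro i _
      by_cases hli : l i = 0
      · rw [h0 i hli, hli]; norm_num
      · exact dg_aux2 hc hc1 (hcl i (lt_of_le_of_ne (hl0 i) (Ne.symm hli)))
          (le_max_right _ _) (by rw [max_le_iff]; constructor <;> [linarith [h2 i]; norm_num])
    have hptwise : ∀ i ∈ (univ : Finset ι),
        max (e i + l i - if i = p then 1 else 0) 0
          ≤ (max (e i) 0 + l i - min (l i) (max (-(e i)) 0)) - (if i = p then l i else 0) := by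
      intro i _
      by_cases hip : i = p
      · have hei : 0 ≤ e i := by rw [hip]; exact hestar
        rw [if_pos hip, if_pos hip]
        rw [max_eq_right (neg_nonpos.2 hei), min_eq_right (hl0 i)]
        have : max (e i + l i - 1) 0 ≤ max (e i) 0 :=
          max_le_max (by linarith [hl_le_one i]) le_rfl
        linarith
      · rw [if_neg hip, if_neg hip, sub_zero, sub_zero]
        exact dg_aux1 _ _ (hl0 i)
    have hsum_bound : ∑ i, max (e i + l i - if i = p then 1 else 0) 0
        ≤ S * (1 - c / 2) + 1 - l p := by
      calc ∑ i, max (e i + l i - if i = p then 1 else 0) 0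
          ≤ ∑ i, ((max (e i) 0 + l i - min (l i) (max (-(e i)) 0)) - (if i = p then l i else 0)) :=
            Finset.sum_le_sum hptwise
        _ = S + 1 - (∑ i, min (l i) (max (-(e i)) 0)) - l p := by
            rw [Finset.sum_sub_distrib, Finset.sum_sub_distrib, Finset.sum_add_distrib, hl1,
              Finset.sum_ite_eq' univ p (fun i => l i), if_pos (mem_univ p)]
        _ ≤ S + 1 - c / 2 * S - l p := by linarith [hmin_sum]
        _ = S * (1 - c / 2) + 1 - l p := by ring
    have hkey : ∑ i, max (e i + l i - if i = p then 1 else 0) 0 ≤ 4 / c - 1 := by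
      have h1 : S * (1 - c / 2) ≤ (4 / c) * (1 - c / 2) := by
        apply mul_le_mul_of_nonneg_right hS ; linarith
      have h2' : (4 / c) * (1 - c / 2) = 4 / c - 2 := by field_simp; ring
      have := hcl p hps
      linarith [hsum_bound]
    rw [div_le_iff₀ hδ0]
    have hone : (4 / c) * (1 - δ) ≤ 1 := by
      have h4c : (0:ℝ) < 4 / c := by positivity
      calc (4 / c) * (1 - δ) ≤ (4 / c) * (c / 4) := by
            apply mul_le_mul_of_nonneg_left _ h4c.le; linarith
        _ = 1 := by field_simp
    nlinarith [hkey]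
  · -- sum zero
    calc ∑ i, dgStep l δ e i
        = (∑ i, (e i + l i - if i = p then 1 else 0)) / δ := by
          rw [Finset.sum_div]; exact Finset.sum_congr rfl fun i _ => hstep i
      _ = ((∑ i, e i) + (∑ i, l i) - ∑ i, if i = p then (1:ℝ) else 0) / δ := by
          rw [Finset.sum_sub_distrib, Finset.sum_add_distrib]
      _ = 0 := by
          rw [hsum, hl1, Finset.sum_ite_eq' univ p (fun _ => (1:ℝ)), if_pos (mem_univ p)]
          norm_num

end DG2

section DG3

open scoped Classical
open Filter Topology

variable {ι : Type*} [Fintype ι] [Nonempty ι]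
variable {E : Type*} [NormedAddCommGroup E] [NormedSpace ℝ E]

noncomputable def dgW (l : ι → ℝ) (δ : ℝ) (q : ι → E) (τ : ℕ) : E :=
  ∑ i, (l i + (1 - δ) * dgE l δ τ i) • q i

lemma dgW_rec {l : ι → ℝ} {δ : ℝ} (hδ0 : 0 < δ) (q : ι → E) (τ : ℕ) :
    dgW l δ q τ = (1 - δ) • q (dgSeq l δ τ) + δ • dgW l δ q (τ + 1) := by
  rw [dgW, dgW, dgE_succ, Finset.smul_sum]
  have hterm : ∀ i ∈ (univ : Finset ι),
      δ • ((l i + (1 - δ) * dgStep l δ (dgE l δ τ) i) • q i)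
      = ((l i + (1 - δ) * dgE l δ τ i) • q i)
        - (if i = dgPick l (dgE l δ τ) then (1 - δ) • q i else 0) := by
    intro i _
    by_cases hip : i = dgPick l (dgE l δ τ)
    · rw [if_pos hip, smul_smul, ← sub_smul]
      congr 1
      rw [dgStep, if_pos hip]
      field_simp
      ring
    · rw [if_neg hip, sub_zero, smul_smul]
      congr 1
      rw [dgStep, if_neg hip]
      field_simp
      ring
  rw [Finset.sum_congr rfl hterm, Finset.sum_sub_distrib,
    Finset.sum_ite_eq' univ (dgPick l (dgE l δ τ)) (fun i => (1 - δ) • q i),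
    if_pos (mem_univ _), dgSeq]
  abel

lemma dgW_partial {l : ι → ℝ} {δ : ℝ} (hδ0 : 0 < δ) (q : ι → E) (T τ : ℕ) :
    dgW l δ q τ
      = (1 - δ) • (∑ t ∈ Finset.range T, δ ^ t • q (dgSeq l δ (τ + t)))
        + δ ^ T • dgW l δ q (τ + T) := by
  induction T generalizing τ with
  | zero => simp
  | succ T ih =>
    have hshift : (∑ t ∈ Finset.range (T + 1), δ ^ t • q (dgSeq l δ (τ + t)))
        = q (dgSeq l δ τ) + δ • ∑ t ∈ Finset.range T, δ ^ t • q (dgSeq l δ (τ + 1 + t)) := by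
      rw [Finset.sum_range_succ', Finset.smul_sum]
      simp only [pow_zero, one_smul, add_zero]
      rw [add_comm]
      congr 1
      apply Finset.sum_congr rfl
      intro t _
      rw [smul_smul, ← pow_succ', show τ + (t + 1) = τ + 1 + t from by omega]
    rw [dgW_rec hδ0 q τ, ih (τ + 1), hshift, pow_succ,
      show τ + (T + 1) = τ + 1 + T from by omega]
    module

lemma dgW_tsum [CompleteSpace E] {l : ι → ℝ} {δ : ℝ} {q : ι → E}
    (hδ0 : 0 < δ) (hδ1 : δ < 1) (C : ℝ) (hC : ∀ s : ℕ, ‖dgW l δ q s‖ ≤ C) (τ : ℕ) :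
    (1 - δ) • (∑' t : ℕ, δ ^ t • q (dgSeq l δ (τ + t))) = dgW l δ q τ := by
  set Mq := ∑ i, ‖q i‖ with hMq
  have hMqb : ∀ i, ‖q i‖ ≤ Mq := fun i =>
    Finset.single_le_sum (fun j _ => norm_nonneg (q j)) (mem_univ i)
  have hsummable : Summable (fun t => δ ^ t • q (dgSeq l δ (τ + t))) := by
    apply Summable.of_norm_bounded
      ((summable_geometric_of_lt_one hδ0.le hδ1).mul_right Mq)
    intro t
    rw [norm_smul, norm_pow, Real.norm_eq_abs, abs_of_pos hδ0]
    exact mul_le_mul_of_nonneg_left (hMqb _) (pow_nonneg hδ0.le t)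
  have h1 : Tendsto (fun T => (1 - δ) • ∑ t ∈ Finset.range T, δ ^ t • q (dgSeq l δ (τ + t)))
      atTop (𝓝 ((1 - δ) • ∑' t : ℕ, δ ^ t • q (dgSeq l δ (τ + t)))) :=
    hsummable.hasSum.tendsto_sum_nat.const_smul _
  have h2 : ∀ T, (1 - δ) • ∑ t ∈ Finset.range T, δ ^ t • q (dgSeq l δ (τ + t))
      = dgW l δ q τ - δ ^ T • dgW l δ q (τ + T) :=
    fun T => eq_sub_of_add_eq (dgW_partial hδ0 q T τ).symm
  have hC0 : 0 ≤ C := le_trans (norm_nonneg _) (hC 0)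
  have htail : Tendsto (fun T => δ ^ T • dgW l δ q (τ + T)) atTop (𝓝 (0 : E)) := by
    apply squeeze_zero_norm (a := fun T => δ ^ T * C)
    · intro T
      rw [norm_smul, norm_pow, Real.norm_eq_abs, abs_of_pos hδ0]
      exact mul_le_mul_of_nonneg_left (hC _) (pow_nonneg hδ0.le T)
    · have := (tendsto_pow_atTop_nhds_zero_of_lt_one hδ0.le hδ1).mul_const C
      simpa using this
  have h3 : Tendsto (fun T => dgW l δ q τ - δ ^ T • dgW l δ q (τ + T)) atTop
      (𝓝 (dgW l δ q τ)) := by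
    have := tendsto_const_nhds (x := dgW l δ q τ) (f := atTop (α := ℕ)) |>.sub htail
    simpa using this
  exact tendsto_nhds_unique (h1.congr h2) h3

end DG3



/-- **Dasgupta–Ghosh.** Any point of the convex hull of finitely many
payoff vectors is, for every high enough discount factor, the exact discounted payoff
of a deterministic sequence of pure actions all of whose continuation payoffs stay
within `ε` of the target. -/
theorem dasgupta_ghosh {n : ℕ} {A : Type*} [Fintype A] [Nonempty A]
    (g : A → EuclideanSpace ℝ (Fin n)) (v : EuclideanSpace ℝ (Fin n))
    (hv : v ∈ convexHull ℝ (Set.range g)) (ε : ℝ) (hε : 0 < ε) :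
    ∃ δhat : ℝ, 0 < δhat ∧ δhat < 1 ∧
      ∀ δ : ℝ, δhat ≤ δ → δ < 1 →
        ∃ a : ℕ → A,
          v = (1 - δ) • ∑' t : ℕ, δ ^ t • g (a t) ∧
          ∀ τ : ℕ, 1 ≤ τ →
            ‖(1 - δ) • (∑' t : ℕ, δ ^ t • g (a (τ + t))) - v‖ ≤ ε := by
  classical
  obtain ⟨ι, hfin, w, z, hw0, hw1, hz, hxv⟩ := mem_convexHull_iff_exists_fintype.1 hv
  letI : Fintype ι := hfin
  haveI : Nonempty ι := by
    by_contra h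
    rw [not_nonempty_iff] at h
    rw [Finset.univ_eq_empty, Finset.sum_empty] at hw1
    norm_num at hw1
  choose h hgz using fun i => Set.mem_range.1 (hz i)
  have hfne := dg_exists_pos hw0 hw1
  set c := ((Finset.univ.filter fun i => 0 < w i)).inf' hfne w with hcdef
  have hc : 0 < c := by
    rw [hcdef, Finset.lt_inf'_iff]
    exact fun i hi => (Finset.mem_filter.1 hi).2
  have hcl : ∀ i, 0 < w i → c ≤ w i := by
    intro i hi
    exact Finset.inf'_le w (Finset.mem_filter.2 ⟨Finset.mem_univ _, hi⟩)
  have hwle1 : ∀ i, w i ≤ 1 := by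
    intro i
    rw [← hw1]
    exact Finset.single_le_sum (fun j _ => hw0 j) (Finset.mem_univ i)
  have hc1 : c ≤ 1 := by
    obtain ⟨i0, hi0⟩ := hfne
    exact le_trans (hcl i0 (Finset.mem_filter.1 hi0).2) (hwle1 i0)
  set M := ∑ i, ‖z i‖ with hMdef
  have hM0 : 0 ≤ M := Finset.sum_nonneg fun i _ => norm_nonneg _
  have hMb : ∀ i, ‖z i‖ ≤ M := fun i =>
    Finset.single_le_sum (fun j _ => norm_nonneg (z j)) (Finset.mem_univ i)
  refine ⟨max (1 - c / 4) (1 - ε * c / (8 * (M + 1))), ?_, ?_, ?_⟩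
  · exact lt_of_lt_of_le (by linarith : (0:ℝ) < 1 - c / 4) (le_max_left _ _)
  · apply max_lt (by linarith)
    have : 0 < ε * c / (8 * (M + 1)) := by positivity
    linarith
  · intro δ hδhat hδ1
    have hδc : 1 - c / 4 ≤ δ := le_trans (le_max_left _ _) hδhat
    have hδe : 1 - ε * c / (8 * (M + 1)) ≤ δ := le_trans (le_max_right _ _) hδhat
    have hδ0 : (0:ℝ) < δ := by linarith
    have hβ : (0:ℝ) ≤ 1 - δ := by linarith
    -- the invariant holds at all times
    have hinv : ∀ t, dgInv w (4 / c) (dgE w δ t) := by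
      intro t
      induction t with
      | zero =>
        rw [dgE_zero]
        refine ⟨fun i _ => rfl, fun i => by norm_num, ?_, by simp⟩
        simp only [Pi.zero_apply, max_self, Finset.sum_const_zero]
        positivity
      | succ t ih =>
        rw [dgE_succ]
        exact dgInv_step hw0 hw1 hc hc1 hcl hδc hδ1 ih
    -- ℓ¹ bound on the deviation vector
    have habs_sum : ∀ τ, ∑ i, |dgE w δ τ i| ≤ 8 / c := by
      intro τ
      obtain ⟨h0, h2, hS, hsm⟩ := hinv τ
      have habs : ∀ x : ℝ, |x| = max x 0 + max (-x) 0 := by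
        intro x
        rcases le_total 0 x with hx | hx
        · rw [abs_of_nonneg hx, max_eq_left hx, max_eq_right (neg_nonpos.2 hx), add_zero]
        · rw [abs_of_nonpos hx, max_eq_right hx, max_eq_left (neg_nonneg.2 hx), zero_add]
      calc ∑ i, |dgE w δ τ i|
          = ∑ i, (max (dgE w δ τ i) 0 + max (-(dgE w δ τ i)) 0) :=
            Finset.sum_congr rfl fun i _ => habs _
        _ = (∑ i, max (dgE w δ τ i) 0) + ∑ i, (max (dgE w δ τ i) 0 - dgE w δ τ i) := by
            rw [← Finset.sum_add_distrib]
            exact Finset.sum_congr rfl fun i _ => by rw [dg_max_neg]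
        _ = (∑ i, max (dgE w δ τ i) 0) + ((∑ i, max (dgE w δ τ i) 0) - ∑ i, dgE w δ τ i) := by
            rw [Finset.sum_sub_distrib]
        _ ≤ 8 / c := by
            rw [hsm, sub_zero]
            have : (4:ℝ) / c + 4 / c = 8 / c := by ring
            linarith
    -- distance from dgW to v
    have hvz : v = ∑ i, w i • z i := hxv.symm
    have hWv : ∀ τ, ‖dgW w δ z τ - v‖ ≤ (1 - δ) * ((8 / c) * M) := by
      intro τ
      rw [hvz, dgW, ← Finset.sum_sub_distrib]
      have hterm : ∀ i ∈ (Finset.univ : Finset ι),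
          (w i + (1 - δ) * dgE w δ τ i) • z i - w i • z i
            = ((1 - δ) * dgE w δ τ i) • z i := by
        intro i _
        rw [← sub_smul]
        congr 1
        ring
      rw [Finset.sum_congr rfl hterm]
      calc ‖∑ i, ((1 - δ) * dgE w δ τ i) • z i‖
          ≤ ∑ i, ‖((1 - δ) * dgE w δ τ i) • z i‖ := norm_sum_le _ _
        _ ≤ ∑ i, (1 - δ) * |dgE w δ τ i| * M := by
            apply Finset.sum_le_sum
            intro i _
            rw [norm_smul, Real.norm_eq_abs, abs_mul, abs_of_nonneg hβ]
            exact mul_le_mul_of_nonneg_left (hMb i) (by positivity)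
        _ = (1 - δ) * (∑ i, |dgE w δ τ i|) * M := by
            rw [← Finset.sum_mul, ← Finset.mul_sum]
        _ ≤ (1 - δ) * ((8 / c) * M) := by
            rw [mul_assoc]
            apply mul_le_mul_of_nonneg_left _ hβ
            exact mul_le_mul_of_nonneg_right (habs_sum τ) hM0
    -- uniform bound on dgW
    have hWb : ∀ s : ℕ, ‖dgW w δ z s‖ ≤ (8 / c) * M + ‖v‖ := by
      intro s
      have h1 : ‖dgW w δ z s‖ ≤ ‖dgW w δ z s - v‖ + ‖v‖ := by
        calc ‖dgW w δ z s‖ = ‖(dgW w δ z s - v) + v‖ := by rw [sub_add_cancel]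
          _ ≤ ‖dgW w δ z s - v‖ + ‖v‖ := norm_add_le _ _
      have h2 : (1 - δ) * ((8 / c) * M) ≤ 1 * ((8 / c) * M) := by
        apply mul_le_mul_of_nonneg_right (by linarith)
        positivity
      have := hWv s
      rw [one_mul] at h2
      linarith
    have htsum : ∀ τ : ℕ,
        (1 - δ) • (∑' t : ℕ, δ ^ t • z (dgSeq w δ (τ + t))) = dgW w δ z τ :=
      fun τ => dgW_tsum hδ0 hδ1 ((8 / c) * M + ‖v‖) hWb τ
    -- the small-deviation bound
    have hsmall : (1 - δ) * ((8 / c) * M) ≤ ε := by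
      have h1 : (1 - δ) ≤ ε * c / (8 * (M + 1)) := by linarith
      have h2 : (1 - δ) * ((8 / c) * M) ≤ (ε * c / (8 * (M + 1))) * ((8 / c) * M) := by
        apply mul_le_mul_of_nonneg_right h1
        positivity
      have h3 : (ε * c / (8 * (M + 1))) * ((8 / c) * M) = ε * (M / (M + 1)) := by
        field_simp
      have h4 : M / (M + 1) ≤ 1 := by
        rw [div_le_one (by linarith)]
        linarith
      have h5 : ε * (M / (M + 1)) ≤ ε * 1 :=
        mul_le_mul_of_nonneg_left h4 hε.le
      rw [h3] at h2
      linarith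
    refine ⟨fun t => h (dgSeq w δ t), ?_, ?_⟩
    · have hconv : (∑' t : ℕ, δ ^ t • g (h (dgSeq w δ t)))
          = ∑' t : ℕ, δ ^ t • z (dgSeq w δ (0 + t)) := by
        apply tsum_congr
        intro t
        rw [hgz, zero_add]
      rw [hconv, htsum 0]
      rw [dgW]
      have : ∀ i ∈ (Finset.univ : Finset ι),
          (w i + (1 - δ) * dgE w δ 0 i) • z i = w i • z i := by
        intro i _
        rw [dgE_zero]
        norm_num
      rw [Finset.sum_congr rfl this, ← hvz]
    · intro τ _
      have hconv : (∑' t : ℕ, δ ^ t • g (h (dgSeq w δ (τ + t))))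
          = ∑' t : ℕ, δ ^ t • z (dgSeq w δ (τ + t)) := by
        apply tsum_congr
        intro t
        rw [hgz]
      rw [hconv, htsum τ]
      exact le_trans (hWv τ) hsmall
end

section
/- Strictness of the minmax comparisons in an explicit game: consider the two-player stage game where player 1 chooses a row in {T,B}, player 2 chooses a column in {L,M,R}, and the payoff pairs (g_1,g_2) are: (T,L) ↦ (1,0), (T,M) ↦ (0,0), (T,R) ↦ (0,3), (B,L) ↦ (0,0), (B,M) ↦ (3,0), (B,R) ↦ (1,1). For this game, v̲_1 = 1/2, v̲_1^MI = 3/4, and v̲_1^pure = 1; in particular v̲_1 < v̲_1^MI < v̲_1^pure. -/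
open Finset

namespace Stmt14

/-- Rows (player 1's actions). -/
inductive Row | T | B
  deriving DecidableEq

instance instFintypeRow : Fintype Row :=
  ⟨{Row.T, Row.B}, fun x => by cases x <;> simp⟩

/-- Columns (player 2's actions). -/
inductive Col | L | M | R
  deriving DecidableEq

instance instFintypeCol : Fintype Col :=
  ⟨{Col.L, Col.M, Col.R}, fun x => by cases x <;> simp⟩

/-- Player 1's rewards. -/
noncomputable def g1 : Row → Col → ℝ
  | .T, .L => 1 | .T, .M => 0 | .T, .R => 0
  | .B, .L => 0 | .B, .M => 3 | .B, .R => 1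

/-- Player 2's rewards. -/
noncomputable def g2 : Row → Col → ℝ
  | .T, .L => 0 | .T, .M => 0 | .T, .R => 3
  | .B, .L => 0 | .B, .M => 0 | .B, .R => 1

/-- `α` is a mixed action of player 1. -/
def IsMixedRow (α : Row → ℝ) : Prop := (∀ r, 0 ≤ α r) ∧ (∑ r, α r) = 1

/-- `β` is a mixed action of player 2. -/
def IsMixedCol (β : Col → ℝ) : Prop := (∀ c, 0 ≤ β c) ∧ (∑ c, β c) = 1

/-- Player 1's payoff from the pure row `r` against the mixed column `β`. -/
noncomputable def pay1 (r : Row) (β : Col → ℝ) : ℝ := ∑ c, β c * g1 r c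

/-- Player 2's payoff from the pure column `c` against the mixed row `α`. -/
noncomputable def pay2 (α : Row → ℝ) (c : Col) : ℝ := ∑ r, α r * g2 r c

/-- Player 1's expected reward from the mixed profile `(α, β)`. -/
noncomputable def E1 (α : Row → ℝ) (β : Col → ℝ) : ℝ := ∑ r, ∑ c, α r * β c * g1 r c

/-- Player 2's expected reward from the mixed profile `(α, β)`. -/
noncomputable def E2 (α : Row → ℝ) (β : Col → ℝ) : ℝ := ∑ r, ∑ c, α r * β c * g2 r c

/-- `(α, β)` is a myopically indifferent mixed action profile (a member of `𝒜^MI`). -/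
def InMI (α : Row → ℝ) (β : Col → ℝ) : Prop :=
  IsMixedRow α ∧ IsMixedCol β ∧
    (∀ r, 0 < α r → pay1 r β = E1 α β) ∧
    (∀ c, 0 < β c → pay2 α c = E2 α β)

/-- Player 1's (mixed) minmax `v̲₁`. -/
noncomputable def v1 : ℝ :=
  sInf {x : ℝ | ∃ β : Col → ℝ, IsMixedCol β ∧ x = ⨆ r : Row, pay1 r β}

/-- Player 1's MI-minmax `v̲₁^MI`. -/
noncomputable def v1MI : ℝ :=
  sInf {x : ℝ | ∃ (α : Row → ℝ) (β : Col → ℝ), InMI α β ∧ x = ⨆ r : Row, pay1 r β}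

/-- Player 1's pure minmax `v̲₁^pure`. -/
noncomputable def v1pure : ℝ := ⨅ c : Col, ⨆ r : Row, g1 r c

instance : Nonempty Row := ⟨.T⟩
instance : Nonempty Col := ⟨.L⟩

lemma sum_row (f : Row → ℝ) : ∑ r, f r = f .T + f .B := by
  rw [show (Finset.univ : Finset Row) = {.T, .B} from rfl,
    Finset.sum_insert (by decide), Finset.sum_singleton]

lemma sum_col (f : Col → ℝ) : ∑ c, f c = f .L + f .M + f .R := by
  rw [show (Finset.univ : Finset Col) = {.L, .M, .R} from rfl,
    Finset.sum_insert (by decide), Finset.sum_insert (by decide), Finset.sum_singleton, add_assoc]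

lemma iSup_row (f : Row → ℝ) : (⨆ r, f r) = max (f .T) (f .B) := by
  apply le_antisymm
  · exact ciSup_le (by rintro (_ | _) <;> simp)
  · exact max_le (le_ciSup (Finite.bddAbove_range f) _) (le_ciSup (Finite.bddAbove_range f) _)

lemma iInf_col (f : Col → ℝ) : (⨅ c, f c) = min (f .L) (min (f .M) (f .R)) := by
  apply le_antisymm
  · exact le_min (ciInf_le (Finite.bddBelow_range f) _)
      (le_min (ciInf_le (Finite.bddBelow_range f) _) (ciInf_le (Finite.bddBelow_range f) _))
  · exact le_ciInf (by rintro (_ | _ | _) <;> simp)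

lemma pay1_T (β : Col → ℝ) : pay1 .T β = β .L := by simp [pay1, sum_col, g1]
lemma pay1_B (β : Col → ℝ) : pay1 .B β = 3 * β .M + β .R := by
  simp [pay1, sum_col, g1]; ring

lemma pay2_L (α : Row → ℝ) : pay2 α .L = 0 := by simp [pay2, sum_row, g2]
lemma pay2_M (α : Row → ℝ) : pay2 α .M = 0 := by simp [pay2, sum_row, g2]
lemma pay2_R (α : Row → ℝ) : pay2 α .R = 3 * α .T + α .B := by
  simp [pay2, sum_row, g2]; ring

lemma E2_eq (α : Row → ℝ) (β : Col → ℝ) : E2 α β = β .R * (3 * α .T + α .B) := by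
  simp [E2, sum_row, sum_col, g2]; ring

lemma E1_eq (α : Row → ℝ) (β : Col → ℝ) :
    E1 α β = α .T * β .L + α .B * (3 * β .M + β .R) := by
  simp [E1, sum_row, sum_col, g1]; ring

noncomputable def β0 : Col → ℝ | .L => 1/2 | .M => 0 | .R => 1/2
noncomputable def αMI : Row → ℝ | .T => 1 | .B => 0
noncomputable def βMI : Col → ℝ | .L => 3/4 | .M => 1/4 | .R => 0

/-- In the explicit 2×3 game, `v̲₁ = 1/2 < v̲₁^MI = 3/4 <
v̲₁^pure = 1`. -/
theorem minmax_strict_example :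
    v1 = 1 / 2 ∧ v1MI = 3 / 4 ∧ v1pure = 1 := by
  have lb1 : ∀ x ∈ {x : ℝ | ∃ β : Col → ℝ, IsMixedCol β ∧ x = ⨆ r : Row, pay1 r β},
      (1 / 2 : ℝ) ≤ x := by
    rintro x ⟨β, ⟨hpos, hsum⟩, rfl⟩
    rw [iSup_row, pay1_T, pay1_B]
    rw [sum_col] at hsum
    have h1 := le_max_left (β .L) (3 * β .M + β .R)
    have h2 := le_max_right (β .L) (3 * β .M + β .R)
    have := hpos Col.M
    linarith
  have mem1 : (1 / 2 : ℝ) ∈ {x : ℝ | ∃ β : Col → ℝ, IsMixedCol β ∧ x = ⨆ r : Row, pay1 r β} := by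
    refine ⟨β0, ⟨by rintro (_ | _ | _) <;> norm_num [β0], by rw [sum_col]; norm_num [β0]⟩, ?_⟩
    rw [iSup_row, pay1_T, pay1_B]
    norm_num [β0]
  have hv1 : v1 = 1 / 2 := by
    refine le_antisymm (csInf_le ⟨1/2, lb1⟩ mem1) (le_csInf ⟨_, mem1⟩ lb1)
  have lbMI : ∀ x ∈ {x : ℝ | ∃ (α : Row → ℝ) (β : Col → ℝ),
      InMI α β ∧ x = ⨆ r : Row, pay1 r β}, (3 / 4 : ℝ) ≤ x := by
    rintro x ⟨α, β, ⟨⟨hαpos, hαsum⟩, ⟨hβpos, hβsum⟩, _, h2⟩, rfl⟩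
    rw [iSup_row, pay1_T, pay1_B]
    rw [sum_col] at hβsum
    rw [sum_row] at hαsum
    have h1 := le_max_left (β .L) (3 * β .M + β .R)
    have hm := le_max_right (β .L) (3 * β .M + β .R)
    rcases lt_or_ge 0 (β .R) with hR | hR
    · -- β .R > 0, so pay2 α R = E2, forcing β .R = 1
      have hE := h2 .R hR
      rw [pay2_R, E2_eq] at hE
      have hα : (1 : ℝ) ≤ 3 * α .T + α .B := by
        have := hαpos Row.T; linarith
      have hR1 : β .R = 1 := by
        have hne : (3 * α .T + α .B) ≠ 0 := by linarith
        have : (1 - β .R) * (3 * α .T + α .B) = 0 := by linarith [hE]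
        rcases mul_eq_zero.mp this with h | h
        · linarith
        · exact absurd h hne
      have := hβpos Col.L
      have := hβpos Col.M
      linarith
    · -- β .R = 0
      have hR0 : β .R = 0 := le_antisymm hR (hβpos Col.R)
      rw [hR0] at hβsum h1 hm ⊢
      linarith
  have memMI : (3 / 4 : ℝ) ∈ {x : ℝ | ∃ (α : Row → ℝ) (β : Col → ℝ),
      InMI α β ∧ x = ⨆ r : Row, pay1 r β} := by
    refine ⟨αMI, βMI, ⟨⟨?_, ?_⟩, ⟨?_, ?_⟩, ?_, ?_⟩, ?_⟩
    · rintro (_ | _) <;> norm_num [αMI]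
    · rw [sum_row]; norm_num [αMI]
    · rintro (_ | _ | _) <;> norm_num [βMI]
    · rw [sum_col]; norm_num [βMI]
    · rintro (_ | _) hr
      · rw [pay1_T, E1_eq]; norm_num [αMI, βMI]
      · norm_num [αMI] at hr
    · rintro (_ | _ | _) hc
      · rw [pay2_L, E2_eq]; norm_num [αMI, βMI]
      · rw [pay2_M, E2_eq]; norm_num [αMI, βMI]
      · norm_num [βMI] at hc
    · rw [iSup_row, pay1_T, pay1_B]; norm_num [βMI]
  have hvMI : v1MI = 3 / 4 := by
    refine le_antisymm (csInf_le ⟨3/4, lbMI⟩ memMI) (le_csInf ⟨_, memMI⟩ lbMI)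
  have hvp : v1pure = 1 := by
    rw [v1pure, iInf_col]
    simp [iSup_row, g1]
  exact ⟨hv1, hvMI, hvp⟩

end Stmt14
end

section
/- Discounted values of an increasing periodic sequence: let T ≥ 1 and let x : ℕ → ℝ be T-periodic (x(t+T) = x(t) for all t) with x(0) ≤ x(1) ≤ … ≤ x(T−1). Then for every δ ∈ (0,1): (i) (1−δ) Σ_{t=0}^∞ δ^t x(t) ≤ (1/T) Σ_{t=0}^{T−1} x(t), and (ii) for every k ∈ ℕ, (1−δ) Σ_{t=0}^∞ δ^t x(t) ≤ (1−δ) Σ_{t=0}^∞ δ^t x(t+k); that is, the δ-discounted value of the sequence started at phase 0 is at most the period mean and at most the δ-discounted value started at any other phase. -/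
/-- For a `T`-periodic real sequence that is increasing on a period
`{0, …, T−1}`, the discounted value started at phase `0` is at most the period mean,
and at most the discounted value started at any other phase. -/
theorem increasing_periodic_discounted (T : ℕ) (hT : 1 ≤ T) (x : ℕ → ℝ)
    (hper : ∀ t, x (t + T) = x t)
    (hmono : ∀ s t : ℕ, s ≤ t → t < T → x s ≤ x t)
    (δ : ℝ) (h0 : 0 < δ) (h1 : δ < 1) :
    ((1 - δ) * ∑' t : ℕ, δ ^ t * x t ≤ (∑ t ∈ Finset.range T, x t) / T) ∧
      ∀ k : ℕ,
        (1 - δ) * ∑' t : ℕ, δ ^ t * x t ≤ (1 - δ) * ∑' t : ℕ, δ ^ t * x (t + k) := by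
  have hTpos : 0 < T := hT
  haveI : NeZero T := ⟨by omega⟩
  -- periodicity for multiples
  have hmul : ∀ n t, x (t + n * T) = x t := by
    intro n
    induction n with
    | zero => intro t; simp
    | succ n ih =>
      intro t
      have h : t + (n + 1) * T = (t + n * T) + T := by ring
      rw [h, hper, ih]
  have hmod : ∀ m, x m = x (m % T) := by
    intro m
    conv_lhs => rw [← Nat.mod_add_div' m T]
    rw [hmul (m / T) (m % T)]
  -- summability
  set M : ℝ := ∑ i ∈ Finset.range T, |x i| with hMdef
  have hMb : ∀ m, |x m| ≤ M := by
    intro m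
    rw [hmod m]
    exact Finset.single_le_sum (f := fun i => |x i|) (fun i _ => abs_nonneg _)
      (Finset.mem_range.2 (Nat.mod_lt m hTpos))
  have hsum : ∀ k, Summable (fun t => δ ^ t * x (t + k)) := by
    intro k
    apply Summable.of_norm_bounded
      ((summable_geometric_of_lt_one h0.le h1).mul_left M)
    intro t
    rw [Real.norm_eq_abs, abs_mul, abs_pow, abs_of_pos h0]
    calc δ ^ t * |x (t + k)| ≤ δ ^ t * M :=
          mul_le_mul_of_nonneg_left (hMb _) (pow_nonneg h0.le t)
      _ = M * δ ^ t := mul_comm _ _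
  have hBpos : (0:ℝ) < 1 - δ ^ T := by
    have := pow_lt_one₀ h0.le h1 (by omega : T ≠ 0)
    linarith
  -- block identity
  set C : ℕ → ℝ := fun k => ∑ j ∈ Finset.range T, δ ^ j * x (j + k) with hCdef
  have hblock : ∀ k, ∑' t : ℕ, δ ^ t * x (t + k) = C k / (1 - δ ^ T) := by
    intro k
    have heq : (∑ j ∈ Finset.range T, δ ^ j * x (j + k))
        + ∑' t : ℕ, δ ^ (t + T) * x ((t + T) + k) = ∑' t : ℕ, δ ^ t * x (t + k) :=
      Summable.sum_add_tsum_nat_add T (hsum k)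
    have htail : (∑' t : ℕ, δ ^ (t + T) * x ((t + T) + k))
        = δ ^ T * ∑' t : ℕ, δ ^ t * x (t + k) := by
      rw [← tsum_mul_left]
      congr 1
      funext t
      have hx : x ((t + T) + k) = x (t + k) := by
        have h : (t + T) + k = (t + k) + T := by ring
        rw [h, hper]
      rw [pow_add, hx]
      ring
    rw [htail] at heq
    rw [eq_div_iff hBpos.ne']
    simp only [hCdef]
    linarith
  -- window sums are constant
  have hwin : ∀ t, ∑ k ∈ Finset.range T, x (t + k) = ∑ i ∈ Finset.range T, x i := by
    intro t
    induction t with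
    | zero => simp
    | succ t ih =>
      have h1 : ∑ k ∈ Finset.range T, x (t + 1 + k)
          = ∑ k ∈ Finset.range T, x (t + (k + 1)) := by
        apply Finset.sum_congr rfl
        intro k _
        congr 1
        ring
      have h2 : ∑ i ∈ Finset.range (T + 1), x (t + i)
          = (∑ k ∈ Finset.range T, x (t + (k + 1))) + x (t + 0) :=
        Finset.sum_range_succ' (fun i => x (t + i)) T
      have h3 : ∑ i ∈ Finset.range (T + 1), x (t + i)
          = (∑ i ∈ Finset.range T, x (t + i)) + x (t + T) :=
        Finset.sum_range_succ (fun i => x (t + i)) T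
      rw [hper t] at h3
      rw [h1]
      simp only [Nat.add_zero] at h2
      linarith
  -- rearrangement: C 0 ≤ C k
  have hCle : ∀ k, C 0 ≤ C k := by
    intro k
    set f : Fin T → ℝ := fun j => δ ^ (j : ℕ) with hf
    set g : Fin T → ℝ := fun j => x (j : ℕ) with hg
    have hanti : Antivary f g := by
      intro i j hg'
      have hij : (i : ℕ) < (j : ℕ) := by
        by_contra h
        exact absurd (hmono j i (by omega) i.isLt) (not_le.2 hg')
      exact pow_le_pow_of_le_one h0.le h1.le hij.le
    set κ : Fin T := ⟨k % T, Nat.mod_lt k hTpos⟩ with hκ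
    have hre := hanti.sum_smul_le_sum_smul_comp_perm (σ := Equiv.addRight κ)
    have hL : ∑ i : Fin T, f i • g i = C 0 := by
      show _ = ∑ j ∈ Finset.range T, δ ^ j * x (j + 0)
      rw [← Fin.sum_univ_eq_sum_range (fun j => δ ^ j * x (j + 0))]
      apply Finset.sum_congr rfl
      intro i _
      simp [hf, hg, smul_eq_mul]
    have hR : ∑ i : Fin T, f i • g (Equiv.addRight κ i) = C k := by
      show _ = ∑ j ∈ Finset.range T, δ ^ j * x (j + k)
      rw [← Fin.sum_univ_eq_sum_range (fun j => δ ^ j * x (j + k))]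
      apply Finset.sum_congr rfl
      intro i _
      have hval : ((i + κ : Fin T) : ℕ) = ((i : ℕ) + k) % T := by
        rw [Fin.val_add]
        simp only [hκ]
        conv_rhs => rw [Nat.add_mod]
        rw [Nat.mod_eq_of_lt i.isLt]
      have hx : x ((i : ℕ) + k) = g (i + κ) := by
        rw [hg]
        simp only [hval]
        exact hmod _
      simp only [Equiv.coe_addRight, smul_eq_mul, hf]
      rw [hx]
    rw [hL, hR] at hre
    exact hre
  have hA : (0:ℝ) < 1 - δ := by linarith
  have hzero : ∑' t : ℕ, δ ^ t * x t = C 0 / (1 - δ ^ T) := by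
    have := hblock 0
    simpa using this
  constructor
  · -- part (i)
    set P : ℝ := ∑ i ∈ Finset.range T, x i with hP
    have hsumC : ∑ k ∈ Finset.range T, C k = (∑ j ∈ Finset.range T, δ ^ j) * P := by
      simp only [hCdef]
      rw [Finset.sum_comm]
      rw [Finset.sum_mul]
      apply Finset.sum_congr rfl
      intro j _
      rw [← Finset.mul_sum, hwin j]
    have hgeo : ∑ j ∈ Finset.range T, δ ^ j = (1 - δ ^ T) / (1 - δ) := by
      rw [geom_sum_eq (by linarith : δ ≠ 1)]
      rw [div_eq_div_iff (by linarith : δ - 1 ≠ 0) hA.ne']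
      ring
    have hTC : (T : ℝ) * C 0 ≤ ∑ k ∈ Finset.range T, C k := by
      have := Finset.card_nsmul_le_sum (Finset.range T) C (C 0)
        (fun k _ => hCle k)
      simpa [nsmul_eq_mul] using this
    rw [hzero]
    have hTpos' : (0:ℝ) < T := by exact_mod_cast hTpos
    have hkey : (T : ℝ) * C 0 ≤ (1 - δ ^ T) / (1 - δ) * P := by
      rw [← hgeo, ← hsumC]; exact hTC
    have h2 : (1 - δ) * ((T : ℝ) * C 0) ≤ (1 - δ ^ T) * P := by
      have h3 := mul_le_mul_of_nonneg_left hkey hA.le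
      have h4 : (1 - δ) * ((1 - δ ^ T) / (1 - δ) * P) = (1 - δ ^ T) * P := by
        field_simp
      linarith [h4.le, h4.ge]
    rw [← mul_div_assoc, div_le_div_iff₀ hBpos hTpos']
    calc (1 - δ) * C 0 * (T : ℝ) = (1 - δ) * ((T : ℝ) * C 0) := by ring
      _ ≤ (1 - δ ^ T) * P := h2
      _ = P * (1 - δ ^ T) := by ring
  · -- part (ii)
    intro k
    rw [hzero, hblock k]
    apply mul_le_mul_of_nonneg_left _ hA.le
    gcongr
    exact hCle k
end
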